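/- Let K be an algebraically closed field of characteristic 2 and let X ⊂ ℙ³(K) be a normal quartic surface with a singular point at P = [0:0:0:1], with Taylor development F = z²Q(x) + zG(x) + B(x). If two distinct singular points of X other than P lie on the same line through P, then their common image x ∈ ℙ² satisfies Q(x) = G(x) = B(x) = 0, the gradients ∇Q(x), ∇G(x), ∇B(x) are pairwise proportional, and ∇Q(x) ≠ 0, ∇G(x) ≠ 0. -/

import Mathlib

open MvPolynomial

private lemma degree_sub_single_aux {σ : Type*} [DecidableEq σ] (d : σ →₀ ℕ) (i : σ)
    (h : d i ≠ 0) : (d - Finsupp.single i 1).degree = d.degree - 1 := by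
  have hle : Finsupp.single i 1 ≤ d := Finsupp.single_le_iff.mpr (Nat.one_le_iff_ne_zero.mpr h)
  have hsum : (d - Finsupp.single i 1) + Finsupp.single i 1 = d := tsub_add_cancel_of_le hle
  have h1 : (Finsupp.single i 1).degree = 1 := by
    simp [Finsupp.degree_eq_weight_one, Finsupp.weight_apply, Finsupp.sum_single_index]
  have hdw : ∀ f : σ →₀ ℕ, f.degree = Finsupp.weight 1 f :=
    fun f => DFunLike.congr_fun Finsupp.degree_eq_weight_one f
  have hadd : ∀ a b : σ →₀ ℕ, (a + b).degree = a.degree + b.degree := fun a b => by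
    rw [hdw, hdw, hdw, map_add]
  have hdeg : (d - Finsupp.single i 1).degree + 1 = d.degree := by
    conv_rhs => rw [← hsum]
    rw [hadd, h1]
  omega

private lemma isHomogeneous_pderiv {σ K : Type*} [CommSemiring K] [DecidableEq σ]
    {φ : MvPolynomial σ K} {n : ℕ} (h : φ.IsHomogeneous n) (i : σ) :
    (pderiv i φ).IsHomogeneous (n - 1) := by
  rw [φ.as_sum, map_sum]
  apply IsHomogeneous.sum
  intro d hd
  rw [pderiv_monomial]
  by_cases h0 : d i = 0
  · simp only [h0, Nat.cast_zero, mul_zero, map_zero]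
    exact isHomogeneous_zero _ _ _
  · apply isHomogeneous_monomial
    have hdd : d.degree = n := by
      rw [DFunLike.congr_fun Finsupp.degree_eq_weight_one d]
      exact h (mem_support_iff.mp hd)
    rw [degree_sub_single_aux d i h0, hdd]

private lemma eval_smul_homog {σ K : Type*} [CommSemiring K] {φ : MvPolynomial σ K} {n : ℕ}
    (h : φ.IsHomogeneous n) (c : K) (v : σ → K) :
    eval (c • v) φ = c ^ n * eval v φ := by
  rw [eval_eq, eval_eq, Finset.mul_sum]
  apply Finset.sum_congr rfl
  intro d hd
  have hdd : ∑ i ∈ d.support, d i = n := by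
    show d.degree = n
    rw [DFunLike.congr_fun Finsupp.degree_eq_weight_one d]
    exact h (mem_support_iff.mp hd)
  calc coeff d φ * ∏ i ∈ d.support, (c • v) i ^ d i
      = coeff d φ * ∏ i ∈ d.support, (c ^ d i * v i ^ d i) := by
        simp [mul_pow]
    _ = c ^ n * (coeff d φ * ∏ i ∈ d.support, v i ^ d i) := by
        rw [Finset.prod_mul_distrib, Finset.prod_pow_eq_pow_sum, hdd]; ring

/-- let `X = {z²Q(x) + zG(x) + B(x) = 0} ⊂ ℙ³` be a normal quartic in
characteristic 2, singular at `P = [0:0:0:1]`. If two distinct singular points other than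
`P` lie on the same line through `P` (i.e. have the same projection `x ∈ ℙ²`), then
`Q(x) = G(x) = B(x) = 0`, the gradients `∇Q(x), ∇G(x), ∇B(x)` are pairwise proportional,
and `∇Q(x) ≠ 0`, `∇G(x) ≠ 0`. -/
theorem stmt_19 (K : Type*) [Field K] [IsAlgClosed K] [CharP K 2]
    (Q G B : MvPolynomial (Fin 3) K)
    (hQ : Q.IsHomogeneous 2) (hG : G.IsHomogeneous 3) (hB : B.IsHomogeneous 4)
    (F : MvPolynomial (Fin 4) K)
    (hF : F = X 3 ^ 2 * rename (Fin.castSucc : Fin 3 → Fin 4) Q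
        + X 3 * rename (Fin.castSucc : Fin 3 → Fin 4) G
        + rename (Fin.castSucc : Fin 3 → Fin 4) B)
    (hfin : {p : Projectivization K (Fin 4 → K) |
        eval p.rep F = 0 ∧ ∀ i, eval p.rep (pderiv i F) = 0}.Finite)
    (x : Fin 3 → K) (hx : x ≠ 0) (z₁ z₂ : K) (hz : z₁ ≠ z₂)
    (h₁ : eval (Fin.snoc x z₁) F = 0 ∧ ∀ i, eval (Fin.snoc x z₁) (pderiv i F) = 0)
    (h₂ : eval (Fin.snoc x z₂) F = 0 ∧ ∀ i, eval (Fin.snoc x z₂) (pderiv i F) = 0) :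
    eval x Q = 0 ∧ eval x G = 0 ∧ eval x B = 0 ∧
    (fun i => eval x (pderiv i Q)) ≠ 0 ∧
    (fun i => eval x (pderiv i G)) ≠ 0 ∧
    ∃ c₁ c₂ : K, (∀ i, eval x (pderiv i G) = c₁ * eval x (pderiv i Q)) ∧
      (∀ i, eval x (pderiv i B) = c₂ * eval x (pderiv i Q)) := by
  have h2K : (2 : K) = 0 := CharTwo.two_eq_zero
  have hchar2 : ((2 : ℕ) : MvPolynomial (Fin 4) K) = 0 :=
    CharP.cast_eq_zero (MvPolynomial (Fin 4) K) 2
  have hcs : Function.Injective (Fin.castSucc : Fin 3 → Fin 4) := Fin.castSucc_injective 3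
  have hsnoc : ∀ (z : K) (p : MvPolynomial (Fin 3) K),
      eval (Fin.snoc x z) (rename (Fin.castSucc : Fin 3 → Fin 4) p) = eval x p := by
    intro z p
    have hcomp : (Fin.snoc x z ∘ Fin.castSucc : Fin 3 → K) = x :=
      funext fun i => Fin.snoc_castSucc _ _ _
    rw [eval_rename, hcomp]
  have hX3 : ∀ z : K, eval (Fin.snoc x z) (X (3 : Fin 4)) = z := by
    intro z
    rw [eval_X]
    exact Fin.snoc_last _ _
  have hevalF : ∀ z : K, eval (Fin.snoc x z) F
      = z ^ 2 * eval x Q + z * eval x G + eval x B := by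
    intro z
    rw [hF]
    simp only [map_add, map_mul, map_pow, hsnoc, hX3]
  have hnotmem : ∀ p : MvPolynomial (Fin 3) K,
      (3 : Fin 4) ∉ (rename (Fin.castSucc : Fin 3 → Fin 4) p).vars := by
    intro p hmem
    have := vars_rename (Fin.castSucc : Fin 3 → Fin 4) p hmem
    simp only [Finset.mem_image] at this
    obtain ⟨j, -, hj⟩ := this
    exact absurd hj (Fin.castSucc_lt_last j).ne
  have hp3 : pderiv (3 : Fin 4) F = rename (Fin.castSucc : Fin 3 → Fin 4) G := by
    rw [hF]
    simp only [map_add, pderiv_mul, pderiv_pow, pderiv_X_self,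
      pderiv_eq_zero_of_notMem_vars (hnotmem Q),
      pderiv_eq_zero_of_notMem_vars (hnotmem G),
      pderiv_eq_zero_of_notMem_vars (hnotmem B), hchar2]
    ring
  have hpj : ∀ j : Fin 3, pderiv (Fin.castSucc j) F
      = X 3 ^ 2 * rename (Fin.castSucc : Fin 3 → Fin 4) (pderiv j Q)
        + X 3 * rename (Fin.castSucc : Fin 3 → Fin 4) (pderiv j G)
        + rename (Fin.castSucc : Fin 3 → Fin 4) (pderiv j B) := by
    intro j
    have hne3 : (3 : Fin 4) ≠ Fin.castSucc j := (Fin.castSucc_lt_last j).ne'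
    rw [hF]
    simp only [map_add, pderiv_mul, pderiv_pow, pderiv_X_of_ne hne3,
      pderiv_rename hcs]
    ring
  have hevalP3 : ∀ z : K, eval (Fin.snoc x z) (pderiv (3 : Fin 4) F) = eval x G := by
    intro z
    rw [hp3, hsnoc]
  have hevalPj : ∀ (z : K) (j : Fin 3), eval (Fin.snoc x z) (pderiv (Fin.castSucc j) F)
      = z ^ 2 * eval x (pderiv j Q) + z * eval x (pderiv j G) + eval x (pderiv j B) := by
    intro z j
    rw [hpj]
    simp only [map_add, map_mul, map_pow, hsnoc, hX3]
  obtain ⟨hF1, hD1⟩ := h₁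
  obtain ⟨hF2, hD2⟩ := h₂
  have hg : eval x G = 0 := by
    have := hD1 3
    rwa [hevalP3] at this
  have e1 := hF1; rw [hevalF] at e1
  have e2 := hF2; rw [hevalF] at e2
  have hzne : z₁ - z₂ ≠ 0 := sub_ne_zero.mpr hz
  have hq : eval x Q = 0 := by
    have key : (z₁ - z₂) ^ 2 * eval x Q = 0 := by
      linear_combination e1 - e2 - (z₁ - z₂) * hg + (z₂ ^ 2 - z₁ * z₂) * eval x Q * h2K
    exact (mul_eq_zero.mp key).resolve_left (pow_ne_zero 2 hzne)
  have hb : eval x B = 0 := by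
    linear_combination e1 - z₁ ^ 2 * hq - z₁ * hg
  have hc : ∀ j : Fin 3, eval x (pderiv j G) = (z₁ + z₂) * eval x (pderiv j Q) := by
    intro j
    have d1 := hD1 (Fin.castSucc j); rw [hevalPj] at d1
    have d2 := hD2 (Fin.castSucc j); rw [hevalPj] at d2
    have key : (z₁ - z₂) * (eval x (pderiv j G) - (z₁ + z₂) * eval x (pderiv j Q)) = 0 := by
      linear_combination d1 - d2 + (z₂ ^ 2 - z₁ ^ 2) * eval x (pderiv j Q) * h2K
    exact sub_eq_zero.mp ((mul_eq_zero.mp key).resolve_left hzne)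
  have hd : ∀ j : Fin 3, eval x (pderiv j B) = (z₁ * z₂) * eval x (pderiv j Q) := by
    intro j
    have d1 := hD1 (Fin.castSucc j); rw [hevalPj] at d1
    linear_combination d1 - z₁ * hc j - (z₁ ^ 2 + z₁ * z₂) * eval x (pderiv j Q) * h2K
  have hz12 : z₁ + z₂ ≠ 0 := by
    intro h
    apply hz
    have : z₁ = -z₂ := eq_neg_of_add_eq_zero_left h
    rw [this, CharTwo.neg_eq]
  -- Now the nonvanishing of the gradient of Q
  set v : K → (Fin 4 → K) := fun z => Fin.snoc x z with hv
  have hxne : ∀ z : K, v z ≠ 0 := by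
    intro z h0
    apply hx
    funext i
    have := congrFun h0 (Fin.castSucc i)
    simpa [hv, Fin.snoc_castSucc] using this
  have hF4 : F.IsHomogeneous 4 := by
    rw [hF]
    have t1 : ((X (3 : Fin 4) : MvPolynomial (Fin 4) K) ^ 2
        * rename (Fin.castSucc : Fin 3 → Fin 4) Q).IsHomogeneous (2 + 2) :=
      (isHomogeneous_X_pow _ 2).mul hQ.rename_isHomogeneous
    have t2 : ((X (3 : Fin 4) : MvPolynomial (Fin 4) K)
        * rename (Fin.castSucc : Fin 3 → Fin 4) G).IsHomogeneous (1 + 3) :=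
      (isHomogeneous_X _ _).mul hG.rename_isHomogeneous
    norm_num at t1 t2
    exact (t1.add t2).add hB.rename_isHomogeneous
  have hFd3 : ∀ i : Fin 4, (pderiv i F).IsHomogeneous 3 := by
    intro i
    have := isHomogeneous_pderiv hF4 i
    norm_num at this
    exact this
  have hQne : (fun i => eval x (pderiv i Q)) ≠ 0 := by
    intro hA
    have ha : ∀ j : Fin 3, eval x (pderiv j Q) = 0 := fun j => congrFun hA j
    have hmem : ∀ z : K, Projectivization.mk K (v z) (hxne z) ∈
        {p : Projectivization K (Fin 4 → K) |
          eval p.rep F = 0 ∧ ∀ i, eval p.rep (pderiv i F) = 0} := by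
      intro z
      obtain ⟨t, ht⟩ := Projectivization.exists_smul_eq_mk_rep K (v z) (hxne z)
      constructor
      · rw [← ht, Units.smul_def, eval_smul_homog hF4, hevalF]
        simp [hq, hg, hb]
      · intro i
        rw [← ht, Units.smul_def, eval_smul_homog (hFd3 i)]
        induction i using Fin.lastCases with
        | last =>
          have : Fin.last 3 = (3 : Fin 4) := rfl
          rw [this, hevalP3, hg, mul_zero]
        | cast j =>
          rw [hevalPj]
          simp [ha, hc, hd]
    have hinj : Function.Injective
        (fun z : K => Projectivization.mk K (v z) (hxne z)) := by
      intro z z' hzz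
      simp only at hzz
      rw [Projectivization.mk_eq_mk_iff'] at hzz
      obtain ⟨a, ha'⟩ := hzz
      obtain ⟨i, hi⟩ : ∃ i, x i ≠ 0 := by
        by_contra hcon
        push_neg at hcon
        exact hx (funext hcon)
      have h1 : a * x i = x i := by
        have := congrFun ha' (Fin.castSucc i)
        simpa [hv, Fin.snoc_castSucc] using this
      have ha1 : a = 1 := by
        refine mul_right_cancel₀ hi ?_
        rw [one_mul]
        exact h1
      have h2 := congrFun ha' (Fin.last 3)
      simp only [hv, Pi.smul_apply, smul_eq_mul, Fin.snoc_last, ha1, one_mul] at h2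
      exact h2.symm
    exact (Set.infinite_of_injective_forall_mem hinj hmem) hfin
  have hGne : (fun i => eval x (pderiv i G)) ≠ 0 := by
    intro hA
    apply hQne
    funext j
    have := congrFun hA j
    simp only [hc j] at this
    simpa using (mul_eq_zero.mp this).resolve_left hz12
  exact ⟨hq, hg, hb, hQne, hGne, z₁ + z₂, z₁ * z₂, hc, hd⟩
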